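/- Let i = √−1 (a primitive 4th root of unity). The subgroup H = {M ∈ G(i) : det M = 1} is isomorphic to SL(2, 𝔽₃); in particular H has order 24. -/

import Mathlib

noncomputable def Rmat (ζ : ℂ) : Matrix (Fin 2) (Fin 2) ℂ := !![ζ, 1; 0, 1]

noncomputable def Smat (ζ : ℂ) : Matrix (Fin 2) (Fin 2) ℂ := !![0, -ζ⁻¹; 1, 0]

noncomputable def G (ζ : ℂ) : Subgroup (Matrix.GeneralLinearGroup (Fin 2) ℂ) :=
  Subgroup.closure {A : Matrix.GeneralLinearGroup (Fin 2) ℂ |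
    (A : Matrix (Fin 2) (Fin 2) ℂ) = Rmat ζ ∨ (A : Matrix (Fin 2) (Fin 2) ℂ) = Smat ζ}

/-- The subgroup of `GL(2, ℂ)` consisting of matrices of determinant `1`. -/
noncomputable def detOne : Subgroup (Matrix.GeneralLinearGroup (Fin 2) ℂ) where
  carrier := {M | (M : Matrix (Fin 2) (Fin 2) ℂ).det = 1}
  one_mem' := by simp
  mul_mem' := by
    intro a b ha hb
    simp only [Set.mem_setOf_eq, Units.val_mul, Matrix.det_mul] at *
    rw [ha, hb, one_mul]
  inv_mem' := by
    intro a ha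
    simp only [Set.mem_setOf_eq] at *
    have h : ((a⁻¹ : (Matrix (Fin 2) (Fin 2) ℂ)ˣ) : Matrix (Fin 2) (Fin 2) ℂ).det *
        ((a : Matrix (Fin 2) (Fin 2) ℂ)).det = 1 := by
      rw [← Matrix.det_mul, ← Units.val_mul, inv_mul_cancel, Units.val_one, Matrix.det_one]
    rw [ha, mul_one] at h
    exact h


open GaussianInt in
private def g (a b : ℤ) : GaussianInt := ⟨a, b⟩

private abbrev Q4 := GaussianInt × GaussianInt × GaussianInt × GaussianInt

private def qmul (x y : Q4) : Q4 :=
  (x.1*y.1 + x.2.1*y.2.2.1, x.1*y.2.1 + x.2.1*y.2.2.2,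
   x.2.2.1*y.1 + x.2.2.2*y.2.2.1, x.2.2.1*y.2.1 + x.2.2.2*y.2.2.2)

private def qdet (x : Q4) : GaussianInt := x.1*x.2.2.2 - x.2.1*x.2.2.1

private def toM (x : Q4) : Matrix (Fin 2) (Fin 2) GaussianInt := !![x.1, x.2.1; x.2.2.1, x.2.2.2]

private def fromM (M : Matrix (Fin 2) (Fin 2) GaussianInt) : Q4 := (M 0 0, M 0 1, M 1 0, M 1 1)

private lemma toM_mul (x y : Q4) : toM (qmul x y) = toM x * toM y := by
  obtain ⟨a,b,c,d⟩ := x; obtain ⟨e,f,g',h⟩ := y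
  refine Matrix.ext fun i j => ?_
  fin_cases i <;> fin_cases j <;>
    simp [toM, qmul, Matrix.mul_apply, Fin.sum_univ_succ]

private lemma fromM_toM (x : Q4) : fromM (toM x) = x := by
  obtain ⟨a,b,c,d⟩ := x
  simp [fromM, toM]

private lemma toM_det (x : Q4) : (toM x).det = qdet x := by
  obtain ⟨a,b,c,d⟩ := x
  simp [toM, qdet, Matrix.det_fin_two_of]

private def auxL : List Q4 := [
  (g 1 0, g 0 0, g 0 0, g 1 0),
  (g 0 1, g 1 0, g 0 0, g 1 0),
  (g 0 0, g 0 1, g 1 0, g 0 0),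
  (g (-1) 0, g 1 1, g 0 0, g 1 0),
  (g 0 0, g 0 1, g 0 1, g 1 0),
  (g 1 0, g (-1) 0, g 1 0, g 0 0),
  (g 0 1, g 0 0, g 0 0, g 0 1),
  (g 0 (-1), g 0 1, g 0 0, g 1 0),
  (g 0 0, g 0 1, g (-1) 0, g 1 1),
  (g 0 1, g 0 0, g 0 1, g 1 0),
  (g (-1) 0, g 0 1, g 0 0, g 0 1),
  (g 1 1, g 0 (-1), g 1 0, g 0 0),
  (g 0 1, g 0 0, g 1 0, g (-1) 0),
  (g 0 0, g (-1) 0, g 0 1, g 0 0),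
  (g 0 0, g 0 1, g 0 (-1), g 0 1),
  (g (-1) 0, g 0 1, g (-1) 0, g 1 1),
  (g 0 (-1), g (-1) 1, g 0 0, g 0 1),
  (g (-1) 1, g 1 0, g 0 1, g 1 0),
  (g (-1) 0, g 0 1, g 0 1, g 0 0),
  (g 0 0, g (-1) 0, g (-1) 0, g 0 1),
  (g 0 1, g 1 0, g 1 0, g 0 0),
  (g 0 1, g 0 0, g 1 1, g 0 (-1)),
  (g 0 0, g (-1) 0, g 1 0, g (-1) 0),
  (g 0 1, g 0 (-1), g 0 1, g 0 0),
  (g (-1) 0, g 0 0, g 0 0, g (-1) 0),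
  (g 0 (-1), g (-1) 1, g 0 (-1), g 0 1),
  (g 1 0, g (-1) 0, g 0 0, g 0 1),
  (g (-1) (-1), g 0 1, g (-1) 0, g 1 1),
  (g 0 (-1), g (-1) 1, g (-1) 0, g 0 1),
  (g 0 0, g (-1) 0, g 0 (-1), g (-1) 1),
  (g (-1) 0, g 1 1, g 0 1, g 1 0),
  (g (-1) 0, g 0 1, g (-1) 1, g 1 0),
  (g (-1) 0, g 0 0, g (-1) 0, g 0 1),
  (g 0 (-1), g (-1) 0, g 0 0, g (-1) 0),
  (g 0 1, g 0 (-1), g 1 1, g 0 (-1)),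
  (g (-1) 1, g 1 0, g 0 1, g 0 0),
  (g 1 0, g (-1) (-1), g 1 0, g (-1) 0),
  (g 0 1, g 0 (-1), g 0 0, g (-1) 0),
  (g (-1) 0, g 0 0, g 0 1, g 0 (-1)),
  (g 0 0, g 0 (-1), g (-1) 0, g 0 0),
  (g 1 (-1), g (-1) 0, g 0 (-1), g 0 1),
  (g 1 0, g (-1) 0, g 0 (-1), g (-1) 1),
  (g 0 (-1), g 0 1, g (-1) 0, g 1 1),
  (g 0 (-1), g (-1) 1, g (-1) (-1), g 0 1),
  (g 0 (-1), g (-1) 0, g 0 (-1), g (-1) 1),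
  (g 1 0, g (-1) (-1), g 0 0, g (-1) 0),
  (g (-1) 0, g 0 0, g (-1) 1, g 1 0),
  (g (-1) (-1), g 0 1, g (-1) 0, g 0 1),
  (g 0 (-1), g (-1) 0, g (-1) 0, g 0 0),
  (g 0 0, g 0 (-1), g 0 (-1), g (-1) 0),
  (g 0 1, g 1 (-1), g 1 1, g 0 (-1)),
  (g (-1) 1, g 1 0, g 0 1, g 0 (-1)),
  (g 1 1, g 0 (-1), g 1 0, g (-1) 0),
  (g 0 1, g 0 (-1), g 1 0, g (-1) (-1)),
  (g 0 0, g 0 (-1), g 0 1, g 0 (-1)),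
  (g (-1) 0, g 1 0, g (-1) 0, g 0 0),
  (g 0 (-1), g 0 0, g 0 0, g 0 (-1)),
  (g 1 0, g 0 0, g 0 (-1), g 0 1),
  (g 1 0, g (-1) 0, g 1 (-1), g (-1) 0),
  (g 0 (-1), g (-1) 0, g (-1) (-1), g 0 1),
  (g 1 (-1), g (-1) 0, g 0 (-1), g (-1) 1),
  (g 1 0, g (-1) (-1), g 0 (-1), g (-1) 0),
  (g 0 0, g 0 (-1), g 1 0, g (-1) (-1)),
  (g (-1) 0, g 1 0, g (-1) 1, g 1 0),
  (g (-1) (-1), g 0 1, g (-1) 0, g 0 0),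
  (g 0 (-1), g 0 0, g 0 (-1), g (-1) 0),
  (g 1 0, g 0 (-1), g 0 0, g 0 (-1)),
  (g 0 1, g 1 0, g 1 1, g 0 (-1)),
  (g (-1) 1, g 1 0, g 0 1, g 1 (-1)),
  (g 0 1, g 1 (-1), g 0 1, g 0 (-1)),
  (g (-1) 0, g 1 0, g 0 0, g 0 (-1)),
  (g 0 (-1), g 0 0, g (-1) 0, g 1 0),
  (g 0 0, g 1 0, g 0 (-1), g 0 0),
  (g 1 0, g (-1) (-1), g 1 (-1), g (-1) 0),
  (g 0 (-1), g 0 0, g (-1) (-1), g 0 1),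
  (g 1 (-1), g (-1) 0, g 0 (-1), g (-1) 0),
  (g 1 0, g 0 (-1), g 1 0, g (-1) (-1)),
  (g 0 1, g 1 (-1), g 0 0, g 0 (-1)),
  (g (-1) 0, g 1 1, g (-1) 1, g 1 0),
  (g (-1) (-1), g 0 1, g (-1) 0, g 1 0),
  (g 1 0, g 0 (-1), g 0 (-1), g 0 0),
  (g 0 0, g 1 0, g 1 0, g 0 (-1)),
  (g (-1) 0, g 1 0, g 0 1, g 1 (-1)),
  (g 0 0, g 1 0, g (-1) 0, g 1 0),
  (g 0 (-1), g 0 1, g 0 (-1), g 0 0),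
  (g 1 0, g 0 (-1), g 1 (-1), g (-1) 0),
  (g 1 1, g 0 (-1), g 1 0, g (-1) (-1)),
  (g 0 (-1), g 0 1, g (-1) (-1), g 0 1),
  (g 1 (-1), g (-1) 0, g 0 (-1), g 0 0),
  (g 0 1, g 1 (-1), g 1 0, g 0 (-1)),
  (g 0 0, g 1 0, g 0 1, g 1 (-1)),
  (g 1 0, g 0 0, g 1 0, g 0 (-1)),
  (g (-1) 0, g 1 1, g (-1) 0, g 1 0),
  (g 1 0, g 0 0, g 1 (-1), g (-1) 0),
  (g 1 1, g 0 (-1), g 1 0, g 0 (-1)),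
  (g 0 1, g 1 0, g 0 1, g 1 (-1))]
private def auxD : List Q4 := [
  (g 1 0, g 0 0, g 0 0, g 1 0),
  (g 0 0, g 0 1, g 0 1, g 1 0),
  (g 1 0, g (-1) 0, g 1 0, g 0 0),
  (g 0 (-1), g (-1) 1, g 0 0, g 0 1),
  (g (-1) 0, g 0 1, g 0 1, g 0 0),
  (g 0 1, g 0 0, g 1 1, g 0 (-1)),
  (g 0 0, g (-1) 0, g 1 0, g (-1) 0),
  (g (-1) 0, g 0 0, g 0 0, g (-1) 0),
  (g 1 (-1), g (-1) 0, g 0 (-1), g 0 1),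
  (g 0 (-1), g 0 1, g (-1) 0, g 1 1),
  (g 0 (-1), g (-1) 0, g 0 (-1), g (-1) 1),
  (g (-1) (-1), g 0 1, g (-1) 0, g 0 1),
  (g 0 0, g 0 (-1), g 0 (-1), g (-1) 0),
  (g (-1) 1, g 1 0, g 0 1, g 0 (-1)),
  (g 0 1, g 0 (-1), g 1 0, g (-1) (-1)),
  (g (-1) 0, g 1 0, g (-1) 0, g 0 0),
  (g 1 0, g (-1) (-1), g 1 (-1), g (-1) 0),
  (g 0 (-1), g 0 0, g (-1) (-1), g 0 1),
  (g 0 1, g 1 (-1), g 0 0, g 0 (-1)),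
  (g (-1) 0, g 1 1, g (-1) 1, g 1 0),
  (g 1 0, g 0 (-1), g 0 (-1), g 0 0),
  (g 0 0, g 1 0, g (-1) 0, g 1 0),
  (g 1 1, g 0 (-1), g 1 0, g 0 (-1)),
  (g 0 1, g 1 0, g 0 1, g 1 (-1))]
private def rq0 : Q4 := (g 0 1, g 1 0, g 0 0, g 1 0)
private def sq0 : Q4 := (g 0 0, g 0 1, g 1 0, g 0 0)
private def rq0' : Q4 := (g 0 (-1), g 0 1, g 0 0, g 1 0)
private def sq0' : Q4 := (g 0 0, g 1 0, g 0 (-1), g 0 0)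
private instance : DecidableEq (Matrix.SpecialLinearGroup (Fin 2) (ZMod 3)) :=
  fun A B => decidable_of_iff (A.val = B.val) Subtype.ext_iff.symm

private def tbl (x : Q4) : Matrix.SpecialLinearGroup (Fin 2) (ZMod 3) :=
  if x = (g 1 0, g 0 0, g 0 0, g 1 0) then ⟨!![1, 0; 0, 1], by decide⟩
  else if x = (g 0 0, g 0 1, g 0 1, g 1 0) then ⟨!![0, 1; 2, 1], by decide⟩
  else if x = (g 1 0, g (-1) 0, g 1 0, g 0 0) then ⟨!![0, 2; 1, 1], by decide⟩
  else if x = (g 0 (-1), g (-1) 1, g 0 0, g 0 1) then ⟨!![1, 2; 2, 2], by decide⟩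
  else if x = (g (-1) 0, g 0 1, g 0 1, g 0 0) then ⟨!![2, 1; 2, 0], by decide⟩
  else if x = (g 0 1, g 0 0, g 1 1, g 0 (-1)) then ⟨!![1, 1; 1, 2], by decide⟩
  else if x = (g 0 0, g (-1) 0, g 1 0, g (-1) 0) then ⟨!![2, 2; 1, 0], by decide⟩
  else if x = (g (-1) 0, g 0 0, g 0 0, g (-1) 0) then ⟨!![2, 0; 0, 2], by decide⟩
  else if x = (g 1 (-1), g (-1) 0, g 0 (-1), g 0 1) then ⟨!![2, 1; 0, 2], by decide⟩
  else if x = (g 0 (-1), g 0 1, g (-1) 0, g 1 1) then ⟨!![2, 0; 1, 2], by decide⟩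
  else if x = (g 0 (-1), g (-1) 0, g 0 (-1), g (-1) 1) then ⟨!![1, 1; 0, 1], by decide⟩
  else if x = (g (-1) (-1), g 0 1, g (-1) 0, g 0 1) then ⟨!![1, 0; 1, 1], by decide⟩
  else if x = (g 0 0, g 0 (-1), g 0 (-1), g (-1) 0) then ⟨!![0, 2; 1, 2], by decide⟩
  else if x = (g (-1) 1, g 1 0, g 0 1, g 0 (-1)) then ⟨!![1, 2; 0, 1], by decide⟩
  else if x = (g 0 1, g 0 (-1), g 1 0, g (-1) (-1)) then ⟨!![1, 0; 2, 1], by decide⟩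
  else if x = (g (-1) 0, g 1 0, g (-1) 0, g 0 0) then ⟨!![0, 1; 2, 2], by decide⟩
  else if x = (g 1 0, g (-1) (-1), g 1 (-1), g (-1) 0) then ⟨!![0, 1; 2, 0], by decide⟩
  else if x = (g 0 (-1), g 0 0, g (-1) (-1), g 0 1) then ⟨!![2, 2; 2, 1], by decide⟩
  else if x = (g 0 1, g 1 (-1), g 0 0, g 0 (-1)) then ⟨!![2, 1; 1, 1], by decide⟩
  else if x = (g (-1) 0, g 1 1, g (-1) 1, g 1 0) then ⟨!![0, 2; 1, 0], by decide⟩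
  else if x = (g 1 0, g 0 (-1), g 0 (-1), g 0 0) then ⟨!![1, 2; 1, 0], by decide⟩
  else if x = (g 0 0, g 1 0, g (-1) 0, g 1 0) then ⟨!![1, 1; 2, 0], by decide⟩
  else if x = (g 1 1, g 0 (-1), g 1 0, g 0 (-1)) then ⟨!![2, 0; 2, 2], by decide⟩
  else if x = (g 0 1, g 1 0, g 0 1, g 1 (-1)) then ⟨!![2, 2; 0, 2], by decide⟩
  else 1

set_option maxRecDepth 100000 in
private lemma hRL : ∀ x ∈ auxL, qmul rq0 x ∈ auxL := by decide

set_option maxRecDepth 100000 in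
private lemma hSL : ∀ x ∈ auxL, qmul sq0 x ∈ auxL := by decide

set_option maxRecDepth 100000 in
private lemma hRL' : ∀ x ∈ auxL, qmul rq0' x ∈ auxL := by decide

set_option maxRecDepth 100000 in
private lemma hSL' : ∀ x ∈ auxL, qmul sq0' x ∈ auxL := by decide

set_option maxRecDepth 100000 in
private lemma hLD : ∀ x ∈ auxL, qdet x = 1 → x ∈ auxD := by decide

set_option maxRecDepth 100000 in
private lemma hD1 : ∀ x ∈ auxD, qdet x = 1 := by decide

set_option maxRecDepth 100000 in
set_option maxHeartbeats 4000000 in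
private lemma tbl_mul : ∀ x ∈ auxD, ∀ y ∈ auxD, tbl (qmul x y) = tbl x * tbl y := by decide

set_option maxRecDepth 100000 in
private lemma tbl_inj : ∀ x ∈ auxD, ∀ y ∈ auxD, tbl x = tbl y → x = y := by decide

set_option maxRecDepth 100000 in
set_option maxHeartbeats 4000000 in
private lemma tbl_surj : ∀ s : Matrix.SpecialLinearGroup (Fin 2) (ZMod 3), ∃ x ∈ auxD, tbl x = s := by
  decide

private abbrev Mz := Matrix (Fin 2) (Fin 2) GaussianInt

private def Ru : Mzˣ := ⟨toM rq0, toM rq0',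
  by rw [← toM_mul]; decide,
  by rw [← toM_mul]; decide⟩

private def Su : Mzˣ := ⟨toM sq0, toM sq0',
  by rw [← toM_mul]; decide,
  by rw [← toM_mul]; decide⟩

private lemma Ru_val : (Ru : Mz) = toM rq0 := rfl
private lemma Su_val : (Su : Mz) = toM sq0 := rfl
private lemma Ru_inv_val : ((Ru⁻¹ : Mzˣ) : Mz) = toM rq0' := rfl
private lemma Su_inv_val : ((Su⁻¹ : Mzˣ) : Mz) = toM sq0' := rfl

private abbrev U : Subgroup Mzˣ := Subgroup.closure {Ru, Su}

private lemma hRuU : Ru ∈ U := Subgroup.subset_closure (Set.mem_insert _ _)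
private lemma hSuU : Su ∈ U := Subgroup.subset_closure (Set.mem_insert_of_mem _ rfl)

set_option maxRecDepth 100000 in
set_option maxHeartbeats 4000000 in
private lemma hwords : ∀ x ∈ auxD, ∃ u : Mzˣ, u ∈ U ∧ (u : Mz) = toM x := by
  intro x hx
  fin_cases hx
  · exact ⟨(1 : Mzˣ), one_mem U, by rw [Units.val_one]; decide⟩
  · exact ⟨Su * Ru, (mul_mem hSuU hRuU), by simp only [Units.val_mul, Ru_val, Su_val, ← toM_mul]; exact congrArg toM (by decide)⟩
  · exact ⟨Ru * Su, (mul_mem hRuU hSuU), by simp only [Units.val_mul, Ru_val, Su_val, ← toM_mul]; exact congrArg toM (by decide)⟩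
  · exact ⟨Su * Su * Ru * Ru, (mul_mem (mul_mem (mul_mem hSuU hSuU) hRuU) hRuU), by simp only [Units.val_mul, Ru_val, Su_val, ← toM_mul]; exact congrArg toM (by decide)⟩
  · exact ⟨Su * Ru * Su * Ru, (mul_mem (mul_mem (mul_mem hSuU hRuU) hSuU) hRuU), by simp only [Units.val_mul, Ru_val, Su_val, ← toM_mul]; exact congrArg toM (by decide)⟩
  · exact ⟨Su * Ru * Ru * Su, (mul_mem (mul_mem (mul_mem hSuU hRuU) hRuU) hSuU), by simp only [Units.val_mul, Ru_val, Su_val, ← toM_mul]; exact congrArg toM (by decide)⟩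
  · exact ⟨Ru * Su * Ru * Su, (mul_mem (mul_mem (mul_mem hRuU hSuU) hRuU) hSuU), by simp only [Units.val_mul, Ru_val, Su_val, ← toM_mul]; exact congrArg toM (by decide)⟩
  · exact ⟨Su * Su * Su * Su, (mul_mem (mul_mem (mul_mem hSuU hSuU) hSuU) hSuU), by simp only [Units.val_mul, Ru_val, Su_val, ← toM_mul]; exact congrArg toM (by decide)⟩
  · exact ⟨Ru * Ru * Su * Ru * Ru * Ru, (mul_mem (mul_mem (mul_mem (mul_mem (mul_mem hRuU hRuU) hSuU) hRuU) hRuU) hRuU), by simp only [Units.val_mul, Ru_val, Su_val, ← toM_mul]; exact congrArg toM (by decide)⟩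
  · exact ⟨Ru * Ru * Ru * Su * Ru * Ru, (mul_mem (mul_mem (mul_mem (mul_mem (mul_mem hRuU hRuU) hRuU) hSuU) hRuU) hRuU), by simp only [Units.val_mul, Ru_val, Su_val, ← toM_mul]; exact congrArg toM (by decide)⟩
  · exact ⟨Su * Su * Ru * Su * Ru * Ru, (mul_mem (mul_mem (mul_mem (mul_mem (mul_mem hSuU hSuU) hRuU) hSuU) hRuU) hRuU), by simp only [Units.val_mul, Ru_val, Su_val, ← toM_mul]; exact congrArg toM (by decide)⟩
  · exact ⟨Su * Su * Ru * Ru * Su * Ru, (mul_mem (mul_mem (mul_mem (mul_mem (mul_mem hSuU hSuU) hRuU) hRuU) hSuU) hRuU), by simp only [Units.val_mul, Ru_val, Su_val, ← toM_mul]; exact congrArg toM (by decide)⟩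
  · exact ⟨Su * Su * Su * Su * Su * Ru, (mul_mem (mul_mem (mul_mem (mul_mem (mul_mem hSuU hSuU) hSuU) hSuU) hSuU) hRuU), by simp only [Units.val_mul, Ru_val, Su_val, ← toM_mul]; exact congrArg toM (by decide)⟩
  · exact ⟨Su * Ru * Su * Ru * Ru * Su, (mul_mem (mul_mem (mul_mem (mul_mem (mul_mem hSuU hRuU) hSuU) hRuU) hRuU) hSuU), by simp only [Units.val_mul, Ru_val, Su_val, ← toM_mul]; exact congrArg toM (by decide)⟩
  · exact ⟨Su * Ru * Ru * Su * Ru * Su, (mul_mem (mul_mem (mul_mem (mul_mem (mul_mem hSuU hRuU) hRuU) hSuU) hRuU) hSuU), by simp only [Units.val_mul, Ru_val, Su_val, ← toM_mul]; exact congrArg toM (by decide)⟩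
  · exact ⟨Su * Su * Su * Su * Ru * Su, (mul_mem (mul_mem (mul_mem (mul_mem (mul_mem hSuU hSuU) hSuU) hSuU) hRuU) hSuU), by simp only [Units.val_mul, Ru_val, Su_val, ← toM_mul]; exact congrArg toM (by decide)⟩
  · exact ⟨Ru * Su * Ru * Ru * Su * Ru * Ru * Ru, (mul_mem (mul_mem (mul_mem (mul_mem (mul_mem (mul_mem (mul_mem hRuU hSuU) hRuU) hRuU) hSuU) hRuU) hRuU) hRuU), by simp only [Units.val_mul, Ru_val, Su_val, ← toM_mul]; exact congrArg toM (by decide)⟩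
  · exact ⟨Ru * Ru * Su * Ru * Ru * Su * Ru * Ru, (mul_mem (mul_mem (mul_mem (mul_mem (mul_mem (mul_mem (mul_mem hRuU hRuU) hSuU) hRuU) hRuU) hSuU) hRuU) hRuU), by simp only [Units.val_mul, Ru_val, Su_val, ← toM_mul]; exact congrArg toM (by decide)⟩
  · exact ⟨Su * Su * Su * Su * Su * Su * Ru * Ru, (mul_mem (mul_mem (mul_mem (mul_mem (mul_mem (mul_mem (mul_mem hSuU hSuU) hSuU) hSuU) hSuU) hSuU) hRuU) hRuU), by simp only [Units.val_mul, Ru_val, Su_val, ← toM_mul]; exact congrArg toM (by decide)⟩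
  · exact ⟨Ru * Ru * Ru * Su * Ru * Ru * Su * Ru, (mul_mem (mul_mem (mul_mem (mul_mem (mul_mem (mul_mem (mul_mem hRuU hRuU) hRuU) hSuU) hRuU) hRuU) hSuU) hRuU), by simp only [Units.val_mul, Ru_val, Su_val, ← toM_mul]; exact congrArg toM (by decide)⟩
  · exact ⟨Su * Su * Su * Su * Su * Ru * Su * Ru, (mul_mem (mul_mem (mul_mem (mul_mem (mul_mem (mul_mem (mul_mem hSuU hSuU) hSuU) hSuU) hSuU) hRuU) hSuU) hRuU), by simp only [Units.val_mul, Ru_val, Su_val, ← toM_mul]; exact congrArg toM (by decide)⟩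
  · exact ⟨Su * Su * Su * Su * Ru * Su * Ru * Su, (mul_mem (mul_mem (mul_mem (mul_mem (mul_mem (mul_mem (mul_mem hSuU hSuU) hSuU) hSuU) hRuU) hSuU) hRuU) hSuU), by simp only [Units.val_mul, Ru_val, Su_val, ← toM_mul]; exact congrArg toM (by decide)⟩
  · exact ⟨Su * Ru * Ru * Su * Ru * Ru * Su * Ru * Ru * Ru, (mul_mem (mul_mem (mul_mem (mul_mem (mul_mem (mul_mem (mul_mem (mul_mem (mul_mem hSuU hRuU) hRuU) hSuU) hRuU) hRuU) hSuU) hRuU) hRuU) hRuU), by simp only [Units.val_mul, Ru_val, Su_val, ← toM_mul]; exact congrArg toM (by decide)⟩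
  · exact ⟨Su * Su * Su * Su * Su * Su * Ru * Su * Ru * Ru, (mul_mem (mul_mem (mul_mem (mul_mem (mul_mem (mul_mem (mul_mem (mul_mem (mul_mem hSuU hSuU) hSuU) hSuU) hSuU) hSuU) hRuU) hSuU) hRuU) hRuU), by simp only [Units.val_mul, Ru_val, Su_val, ← toM_mul]; exact congrArg toM (by decide)⟩



private noncomputable def detOneZ : Subgroup Mzˣ where
  carrier := {u | (u : Mz).det = 1}
  one_mem' := by simp
  mul_mem' := by
    intro a b ha hb
    simp only [Set.mem_setOf_eq, Units.val_mul, Matrix.det_mul] at *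
    rw [ha, hb, one_mul]
  inv_mem' := by
    intro a ha
    simp only [Set.mem_setOf_eq] at *
    have h : ((a⁻¹ : Mzˣ) : Mz).det * ((a : Mz)).det = 1 := by
      rw [← Matrix.det_mul, ← Units.val_mul, inv_mul_cancel, Units.val_one, Matrix.det_one]
    rw [ha, mul_one] at h
    exact h

private lemma mem_U_val (u : Mzˣ) (hu : u ∈ U) : ∃ x ∈ auxL, (u : Mz) = toM x := by
  induction hu using Subgroup.closure_induction_left with
  | one => exact ⟨(g 1 0, g 0 0, g 0 0, g 1 0), by decide, by rw [Units.val_one]; decide⟩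
  | mul_left x hx y _ ih =>
    obtain ⟨z, hz, hval⟩ := ih
    rcases hx with rfl | hx
    · exact ⟨qmul rq0 z, hRL z hz, by rw [Units.val_mul, Ru_val, hval, toM_mul]⟩
    · rw [Set.mem_singleton_iff] at hx; subst hx
      exact ⟨qmul sq0 z, hSL z hz, by rw [Units.val_mul, Su_val, hval, toM_mul]⟩
  | inv_mul_cancel x hx y _ ih =>
    obtain ⟨z, hz, hval⟩ := ih
    rcases hx with rfl | hx
    · exact ⟨qmul rq0' z, hRL' z hz, by rw [Units.val_mul, Ru_inv_val, hval, toM_mul]⟩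
    · rw [Set.mem_singleton_iff] at hx; subst hx
      exact ⟨qmul sq0' z, hSL' z hz, by rw [Units.val_mul, Su_inv_val, hval, toM_mul]⟩

private lemma mem_V_iff (u : Mzˣ) : u ∈ U ⊓ detOneZ ↔ ∃ x ∈ auxD, (u : Mz) = toM x := by
  constructor
  · rintro ⟨hU, hdet⟩
    obtain ⟨x, hx, hval⟩ := mem_U_val u hU
    have hd : qdet x = 1 := by
      rw [← toM_det, ← hval]
      exact hdet
    exact ⟨x, hLD x hx hd, hval⟩
  · rintro ⟨x, hx, hval⟩
    obtain ⟨w, hwU, hwval⟩ := hwords x hx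
    have : w = u := Units.ext (hwval.trans hval.symm)
    subst this
    refine ⟨hwU, ?_⟩
    show (w : Mz).det = 1
    rw [hwval, toM_det]
    exact hD1 x hx

private noncomputable def Psi : Mz →+* Matrix (Fin 2) (Fin 2) ℂ :=
  (GaussianInt.toComplex : GaussianInt →+* ℂ).mapMatrix

private lemma Psi_inj : Function.Injective Psi := by
  intro M N h
  refine Matrix.ext fun i j => GaussianInt.toComplex_injective ?_
  have := congrFun (congrFun h i) j
  simpa [Psi, RingHom.mapMatrix_apply, Matrix.map_apply] using this

private noncomputable def Phi : Mzˣ →* Matrix.GeneralLinearGroup (Fin 2) ℂ :=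
  Units.map Psi.toMonoidHom

private lemma Phi_inj : Function.Injective Phi := Units.map_injective Psi_inj

private lemma Psi_R : Psi (toM rq0) = Rmat Complex.I := by
  ext i j
  fin_cases i <;> fin_cases j <;>
    simp [Psi, toM, rq0, Rmat, RingHom.mapMatrix_apply, Matrix.map_apply,
      GaussianInt.toComplex_def, g]

private lemma Psi_S : Psi (toM sq0) = Smat Complex.I := by
  ext i j
  fin_cases i <;> fin_cases j <;>
    simp [Psi, toM, sq0, Smat, RingHom.mapMatrix_apply, Matrix.map_apply,
      GaussianInt.toComplex_def, g, Complex.inv_I]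

private lemma Phi_Ru_val : ((Phi Ru : Matrix.GeneralLinearGroup (Fin 2) ℂ) : Matrix (Fin 2) (Fin 2) ℂ) = Rmat Complex.I := by
  simpa [Phi, Ru_val] using Psi_R

private lemma Phi_Su_val : ((Phi Su : Matrix.GeneralLinearGroup (Fin 2) ℂ) : Matrix (Fin 2) (Fin 2) ℂ) = Smat Complex.I := by
  simpa [Phi, Su_val] using Psi_S

private lemma hUmap : Subgroup.map Phi U = G Complex.I := by
  rw [U, MonoidHom.map_closure, G]
  congr 1
  rw [Set.image_pair]
  ext A
  simp only [Set.mem_insert_iff, Set.mem_singleton_iff, Set.mem_setOf_eq]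
  constructor
  · rintro (rfl | rfl)
    · exact Or.inl Phi_Ru_val
    · exact Or.inr Phi_Su_val
  · rintro (h | h)
    · exact Or.inl (Units.ext (h.trans Phi_Ru_val.symm))
    · exact Or.inr (Units.ext (h.trans Phi_Su_val.symm))

private lemma Phi_val (u : Mzˣ) :
    ((Phi u : Matrix.GeneralLinearGroup (Fin 2) ℂ) : Matrix (Fin 2) (Fin 2) ℂ) = Psi (u : Mz) := rfl

private lemma hVmap : Subgroup.map Phi (U ⊓ detOneZ) = G Complex.I ⊓ detOne := by
  ext A
  simp only [Subgroup.mem_map, Subgroup.mem_inf]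
  constructor
  · rintro ⟨u, ⟨hU, hdet⟩, rfl⟩
    constructor
    · rw [← hUmap]
      exact Subgroup.mem_map_of_mem Phi hU
    · show ((Phi u : Matrix.GeneralLinearGroup (Fin 2) ℂ) : Matrix (Fin 2) (Fin 2) ℂ).det = 1
      rw [Phi_val, Psi, ← RingHom.map_det]
      have : (u : Mz).det = 1 := hdet
      rw [this, map_one]
  · rintro ⟨hG, hdet⟩
    rw [← hUmap] at hG
    obtain ⟨u, hU, rfl⟩ := hG
    refine ⟨u, ⟨hU, ?_⟩, rfl⟩
    show (u : Mz).det = 1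
    apply GaussianInt.toComplex_injective
    have : ((Phi u : Matrix.GeneralLinearGroup (Fin 2) ℂ) : Matrix (Fin 2) (Fin 2) ℂ).det = 1 := hdet
    rw [Phi_val, Psi, ← RingHom.map_det] at this
    simpa using this

private noncomputable def Fhom : ↥(U ⊓ detOneZ) →* Matrix.SpecialLinearGroup (Fin 2) (ZMod 3) :=
  MonoidHom.mk' (fun u => tbl (fromM ((u : Mzˣ) : Mz))) (by
    rintro ⟨u, hu⟩ ⟨v, hv⟩
    obtain ⟨x, hx, hux⟩ := (mem_V_iff u).mp hu
    obtain ⟨y, hy, hvy⟩ := (mem_V_iff v).mp hv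
    show tbl (fromM ((u * v : Mzˣ) : Mz)) = tbl (fromM (u : Mz)) * tbl (fromM (v : Mz))
    rw [Units.val_mul, hux, hvy, ← toM_mul, fromM_toM, fromM_toM, fromM_toM]
    exact tbl_mul x hx y hy)

private lemma Fhom_bij : Function.Bijective Fhom := by
  constructor
  · rintro ⟨u, hu⟩ ⟨v, hv⟩ h
    obtain ⟨x, hx, hux⟩ := (mem_V_iff u).mp hu
    obtain ⟨y, hy, hvy⟩ := (mem_V_iff v).mp hv
    have : tbl (fromM (u : Mz)) = tbl (fromM (v : Mz)) := h
    rw [hux, hvy, fromM_toM, fromM_toM] at this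
    have hxy := tbl_inj x hx y hy this
    subst hxy
    exact Subtype.ext (Units.ext (hux.trans hvy.symm))
  · intro s
    obtain ⟨x, hx, hxs⟩ := tbl_surj s
    obtain ⟨w, hwU, hwval⟩ := hwords x hx
    have hwV : w ∈ U ⊓ detOneZ := (mem_V_iff w).mpr ⟨x, hx, hwval⟩
    refine ⟨⟨w, hwV⟩, ?_⟩
    show tbl (fromM (w : Mz)) = s
    rw [hwval, fromM_toM]
    exact hxs

set_option maxRecDepth 10000 in
private lemma card_SL : Nat.card (Matrix.SpecialLinearGroup (Fin 2) (ZMod 3)) = 24 := by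
  rw [Nat.card_eq_fintype_card]
  decide

theorem G_i_SL2_part :
    Nonempty (↥(G Complex.I ⊓ detOne) ≃* Matrix.SpecialLinearGroup (Fin 2) (ZMod 3)) ∧
    Nat.card ↥(G Complex.I ⊓ detOne) = 24 := by
  have e1 : ↥(U ⊓ detOneZ) ≃* ↥(G Complex.I ⊓ detOne) :=
    (Subgroup.equivMapOfInjective _ Phi Phi_inj).trans (MulEquiv.subgroupCongr hVmap)
  have e2 : ↥(U ⊓ detOneZ) ≃* Matrix.SpecialLinearGroup (Fin 2) (ZMod 3) :=
    MulEquiv.ofBijective Fhom Fhom_bij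
  refine ⟨⟨e1.symm.trans e2⟩, ?_⟩
  rw [← Nat.card_congr e1.toEquiv, Nat.card_congr e2.toEquiv, card_SL]
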